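/- Suppose f, f' : V(C_n) → {1,...,k} are k-color weak maximizers of the Wiener index W on C_n, type(f) = (n_1,...,n_k) written in non-decreasing order, 1 ≤ j ≤ j' ≤ k, and type(f') = R_{j,j'}(type(f)). If n is even and n_j = n_{j'} = 2a for some positive integer a, then W(f) = W(f'). -/

import Mathlib

open SimpleGraph Finset

/-- The cycle graph on vertex set `ZMod n`, with an edge between `i` and `i+1` (mod `n`). -/
def cycleGraphZMod (n : ℕ) : SimpleGraph (ZMod n) :=
  SimpleGraph.fromRel (fun u v => v = u + 1)

/-- The Wiener index of a set of vertices: the sum of all pairwise geodesic distances. -/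
noncomputable def wienerSet {V : Type*} [Fintype V] [DecidableEq V]
    (G : SimpleGraph V) (A : Finset V) : ℕ :=
  (∑ p ∈ A.offDiag, G.dist p.1 p.2) / 2

/-- `A` is a maximizer of `W` on `G`. -/
def IsWienerMaximizer {V : Type*} [Fintype V] [DecidableEq V]
    (G : SimpleGraph V) (A : Finset V) : Prop :=
  ∀ B : Finset V, B.card = A.card → wienerSet G B ≤ wienerSet G A

/-- `A ⊆ V(C_n)` is almost good. -/
def AlmostGood (n : ℕ) (A : Finset (ZMod n)) : Prop :=
  A.card = 1 ∨ A.card = n - 1 ∨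
    ∃ c₁ c₂ : ((cycleGraphZMod n).induce (↑A : Set (ZMod n))).ConnectedComponent,
      c₁ ≠ c₂ ∧ (∀ c, c = c₁ ∨ c = c₂) ∧
      (c₁.supp.ncard : ℤ) - (c₂.supp.ncard : ℤ) ≤ 1 ∧
      (c₂.supp.ncard : ℤ) - (c₁.supp.ncard : ℤ) ≤ 1

/-- `A ⊆ V(C_n)` is good: both `A` and its complement are almost good. -/
def GoodSet (n : ℕ) [NeZero n] (A : Finset (ZMod n)) : Prop :=
  AlmostGood n A ∧ AlmostGood n (Finset.univ \ A)

/-- The color class of color `i` for the coloring `f`. -/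
def colorClass {V : Type*} [Fintype V] {k : ℕ} (f : V → Fin k) (i : Fin k) : Finset V :=
  Finset.univ.filter (fun v => f v = i)

/-- The Wiener index of a coloring: the sum of the Wiener indices of its color classes. -/
noncomputable def wienerColoring {V : Type*} [Fintype V] [DecidableEq V] {k : ℕ}
    (G : SimpleGraph V) (f : V → Fin k) : ℕ :=
  ∑ i : Fin k, wienerSet G (colorClass f i)

/-- The type of a coloring, as the multiset of cardinalities of its color classes
(equality of multisets is equality of the nondecreasing rearrangements). -/
def colorType {V : Type*} [Fintype V] {k : ℕ} (f : V → Fin k) : Multiset ℕ :=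
  (Finset.univ : Finset (Fin k)).val.map (fun i => (colorClass f i).card)

/-- `f` is a `k`-color weak maximizer of `W` on `G`. -/
def IsWeakMaximizer {V : Type*} [Fintype V] [DecidableEq V] {k : ℕ}
    (G : SimpleGraph V) (f : V → Fin k) : Prop :=
  Function.Surjective f ∧ ∀ g : V → Fin k, Function.Surjective g →
    colorType g = colorType f → wienerColoring G g ≤ wienerColoring G f

/-- The coloring obtained from `f` by swapping the colors of `u` and `v`. -/
def swapColors {V α : Type*} [DecidableEq V] (f : V → α) (u v : V) : V → α :=
  f ∘ Equiv.swap u v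

/-- `f` is a `k`-color local weak maximizer of `W` on `G`. -/
def IsLocalWeakMaximizer {V : Type*} [Fintype V] [DecidableEq V] {k : ℕ}
    (G : SimpleGraph V) (f : V → Fin k) : Prop :=
  Function.Surjective f ∧ ∀ u v : V, G.Adj u v →
    wienerColoring G (swapColors f u v) ≤ wienerColoring G f

/-- The number of vertices to the left of `u` in the path that get the same color as `u`. -/
def leftCount {n k : ℕ} (f : Fin n → Fin k) (u : Fin n) : ℕ :=
  (Finset.univ.filter (fun w => w < u ∧ f w = f u)).card

/-- The number of vertices to the right of `u` in the path that get the same color as `u`. -/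
def rightCount {n k : ℕ} (f : Fin n → Fin k) (u : Fin n) : ℕ :=
  (Finset.univ.filter (fun w => u < w ∧ f w = f u)).card

/-- The sum of the `j` largest entries of a multiset of naturals. -/
def sumLargest (s : Multiset ℕ) (j : ℕ) : ℕ :=
  (((s.sort (· ≤ ·)).reverse).take j).sum

/-- `x ≺ y` : `x` is majorized by `y`. -/
def MajorizedBy (x y : Multiset ℕ) : Prop :=
  x.card = y.card ∧ x.sum = y.sum ∧ ∀ j, sumLargest x j ≤ sumLargest y j

/-- The reverse Robin Hood transfer `R_{j,j'}` applied to the (sorted) list `t`,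
with `j ≤ j'` zero-indexed: subtract `1` from the `j`-th entry and add `1` to the `j'`-th
entry; the result is recorded as a multiset (i.e. up to rearrangement). -/
def rhTransfer (t : List ℕ) (j j' : ℕ) : Multiset ℕ :=
  ↑((t.set j (t.getD j 0 - 1)).set j' ((t.set j (t.getD j 0 - 1)).getD j' 0 + 1))

/-- `t(n,k)` : the unique nondecreasing `k`-tuple of positive integers summing to `n`
whose entries pairwise differ by at most one, as a multiset. -/
def equitableType (n k : ℕ) : Multiset ℕ :=
  Multiset.replicate (k - n % k) (n / k) + Multiset.replicate (n % k) (n / k + 1)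

/-- One step of the operation `R`: `s ∈ R({t})`, i.e. `s = t` or `s` is obtained from `t` by
a reverse Robin Hood transfer between two entries that are equal and even. -/
def REstep (t s : Multiset ℕ) : Prop :=
  s = t ∨ ∃ m : ℕ, Even m ∧ 2 ≤ t.count m ∧
    s = (t - Multiset.replicate 2 m) + {m - 1, m + 1}

/-- `s ∈ R^∞({t(n,k)})`. -/
def InRInfty (n k : ℕ) (s : Multiset ℕ) : Prop :=
  Relation.ReflTransGen REstep (equitableType n k) s

namespace CycAux

variable {n : ℕ} [NeZero n]
set_option linter.unusedSectionVars false

lemma adj_iff (u v : ZMod n) :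
    (cycleGraphZMod n).Adj u v ↔ u ≠ v ∧ (v = u + 1 ∨ u = v + 1) := by
  simp [cycleGraphZMod, SimpleGraph.fromRel_adj]

lemma adj_add_one (hn : 2 ≤ n) (x : ZMod n) : (cycleGraphZMod n).Adj x (x + 1) := by
  haveI : Fact (1 < n) := ⟨hn⟩
  refine (adj_iff _ _).2 ⟨fun hx => ?_, Or.inl rfl⟩
  have h1 : (1 : ZMod n) = 0 := by
    have := left_eq_add.mp hx
    exact this
  have := ZMod.val_one n
  rw [h1] at this
  simp at this

lemma adj_sub_one (hn : 2 ≤ n) (x : ZMod n) : (cycleGraphZMod n).Adj x (x - 1) := by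
  haveI : Fact (1 < n) := ⟨hn⟩
  refine (adj_iff _ _).2 ⟨fun hx => ?_, Or.inr (by ring)⟩
  have h1 : (1 : ZMod n) = 0 := by
    have hx1 : x + 1 = x + 0 := by
      rw [add_zero]
      exact eq_sub_iff_add_eq.mp hx
    exact add_left_cancel hx1
  have := ZMod.val_one n
  rw [h1] at this
  simp at this

lemma exists_walk_add (hn : 2 ≤ n) (u : ZMod n) (m : ℕ) :
    ∃ w : (cycleGraphZMod n).Walk u (u + (m : ZMod n)), w.length = m := by
  induction m with
  | zero => exact ⟨SimpleGraph.Walk.nil.copy rfl (by simp), by simp⟩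
  | succ m ih =>
      obtain ⟨w, hw⟩ := ih
      refine ⟨(w.concat (adj_add_one hn _)).copy rfl (by push_cast; ring), by simp [hw]⟩

lemma exists_walk_sub (hn : 2 ≤ n) (u : ZMod n) (m : ℕ) :
    ∃ w : (cycleGraphZMod n).Walk u (u - (m : ZMod n)), w.length = m := by
  induction m with
  | zero => exact ⟨SimpleGraph.Walk.nil.copy rfl (by simp), by simp⟩
  | succ m ih =>
      obtain ⟨w, hw⟩ := ih
      refine ⟨(w.concat (adj_sub_one hn _)).copy rfl (by push_cast; ring), by simp [hw]⟩


/-- potential function -/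
def psi (n : ℕ) (d : ZMod n) : ℕ := min d.val (n - d.val)

lemma neg_one_eq (hn : 1 ≤ n) : ((n - 1 : ℕ) : ZMod n) = -1 := by
  have h0 : ((n : ℕ) : ZMod n) = 0 := ZMod.natCast_self n
  have : ((n - 1 : ℕ) : ZMod n) + 1 = ((n : ℕ) : ZMod n) := by
    rw [← Nat.cast_succ]
    congr 1
    omega
  rw [h0] at this
  linear_combination this

lemma val_add_one (hn : 2 ≤ n) (d : ZMod n) : (d + 1).val = (d.val + 1) % n := by
  haveI : Fact (1 < n) := ⟨hn⟩
  rw [ZMod.val_add, ZMod.val_one]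

lemma val_sub_one (hn : 2 ≤ n) (d : ZMod n) : (d - 1).val = (d.val + (n - 1)) % n := by
  have : d - 1 = d + ((n - 1 : ℕ) : ZMod n) := by rw [neg_one_eq (by omega)]; ring
  rw [this, ZMod.val_add, ZMod.val_cast_of_lt (by omega)]

lemma psi_add_one (hn : 2 ≤ n) (d : ZMod n) : psi n (d + 1) ≤ psi n d + 1 := by
  have h1 := val_add_one hn d
  have h2 := ZMod.val_lt d
  unfold psi
  rcases Nat.lt_or_ge (d.val + 1) n with H | H
  · rw [Nat.mod_eq_of_lt H] at h1
    simp only [Nat.min_def] at *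
    split_ifs <;> omega
  · have hd : d.val + 1 = n := by omega
    rw [hd, Nat.mod_self] at h1
    simp only [Nat.min_def] at *
    split_ifs <;> omega

lemma psi_sub_one (hn : 2 ≤ n) (d : ZMod n) : psi n (d - 1) ≤ psi n d + 1 := by
  have h1 := val_sub_one hn d
  have h2 := ZMod.val_lt d
  unfold psi
  rcases eq_or_ne d.val 0 with H | H
  · rw [H] at h1
    rw [Nat.mod_eq_of_lt (by omega)] at h1
    simp only [Nat.min_def] at *
    split_ifs <;> omega
  · have : (d.val + (n - 1)) % n = d.val - 1 := by
      rw [Nat.mod_eq_sub_mod (by omega), Nat.mod_eq_of_lt (by omega)]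
      omega
    rw [this] at h1
    simp only [Nat.min_def] at *
    split_ifs <;> omega

lemma psi_le_walk_length (hn : 2 ≤ n) {u v : ZMod n} (w : (cycleGraphZMod n).Walk u v) :
    psi n (v - u) ≤ w.length := by
  induction w with
  | nil => simp [psi]
  | @cons a b c hadj w ih =>
      rw [SimpleGraph.Walk.length_cons]
      rcases ((adj_iff a b).1 hadj).2 with hb | hb
      · have hd : c - a = (c - b) + 1 := by rw [hb]; ring
        rw [hd]
        calc psi n ((c - b) + 1) ≤ psi n (c - b) + 1 := psi_add_one hn _
          _ ≤ w.length + 1 := by omega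
      · have hd : c - a = (c - b) - 1 := by rw [hb]; ring
        rw [hd]
        calc psi n ((c - b) - 1) ≤ psi n (c - b) + 1 := psi_sub_one hn _
          _ ≤ w.length + 1 := by omega

lemma dist_eq_psi (hn : 2 ≤ n) (u v : ZMod n) :
    (cycleGraphZMod n).dist u v = psi n (v - u) := by
  have hcast : u + (((v - u).val : ℕ) : ZMod n) = v := by
    rw [ZMod.natCast_rightInverse (v - u)]; ring
  obtain ⟨w1, hw1⟩ := exists_walk_add hn u (v - u).val
  have hle1 : (cycleGraphZMod n).dist u v ≤ (v - u).val := by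
    have := SimpleGraph.dist_le w1
    rw [hw1, hcast] at this
    exact this
  obtain ⟨w2, hw2⟩ := exists_walk_sub hn u (n - (v - u).val)
  have hcast2 : u - (((n - (v - u).val : ℕ) : ZMod n)) = v := by
    have hvu := ZMod.val_lt (v - u)
    rw [Nat.cast_sub (by omega), ZMod.natCast_self, ZMod.natCast_rightInverse (v - u)]
    ring
  have hle2 : (cycleGraphZMod n).dist u v ≤ n - (v - u).val := by
    have := SimpleGraph.dist_le w2
    rw [hw2, hcast2] at this
    exact this
  have hreach : (cycleGraphZMod n).Reachable u v := by
    rw [← hcast]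
    exact ⟨w1⟩
  obtain ⟨w, hw⟩ := hreach.exists_walk_length_eq_dist
  have hge := psi_le_walk_length hn w
  rw [hw] at hge
  unfold psi at *
  omega


/-- separation predicate for the "diameter" cut indexed by `i` -/
def sep (h : ℕ) (u v i : ZMod n) : Prop :=
  ((u + i).val < h ∧ ¬ ((v + i).val < h)) ∨ (¬ ((u + i).val < h) ∧ (v + i).val < h)

instance (h : ℕ) (u v i : ZMod n) : Decidable (sep h u v i) := by
  unfold sep; infer_instance

lemma count_xor (h δ : ℕ) (hh : 0 < h) (hδ : δ < 2 * h) :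
    ((Finset.range (2 * h)).filter
      (fun s => (s < h ∧ ¬ ((s + δ) % (2 * h) < h)) ∨ (¬ (s < h) ∧ (s + δ) % (2 * h) < h))).card
      = 2 * min δ (2 * h - δ) := by
  rcases le_or_gt δ h with hc | hc
  · have hset : (Finset.range (2 * h)).filter
        (fun s => (s < h ∧ ¬ ((s + δ) % (2 * h) < h)) ∨ (¬ (s < h) ∧ (s + δ) % (2 * h) < h))
        = Finset.Ico (h - δ) h ∪ Finset.Ico (2 * h - δ) (2 * h) := by
      ext s
      by_cases hs : s < 2 * h
      · simp only [Finset.mem_filter, Finset.mem_range, Finset.mem_union, Finset.mem_Ico]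
        rcases Nat.lt_or_ge (s + δ) (2 * h) with H | H
        · rw [Nat.mod_eq_of_lt H]; omega
        · rw [Nat.mod_eq_sub_mod H, Nat.mod_eq_of_lt (by omega)]; omega
      · simp only [Finset.mem_filter, Finset.mem_range, Finset.mem_union, Finset.mem_Ico]
        omega
    rw [hset, Finset.card_union_of_disjoint, Nat.card_Ico, Nat.card_Ico]
    · omega
    · rw [Finset.disjoint_left]
      intro s hs1 hs2
      simp only [Finset.mem_Ico] at hs1 hs2
      omega
  · have hset : (Finset.range (2 * h)).filter
        (fun s => (s < h ∧ ¬ ((s + δ) % (2 * h) < h)) ∨ (¬ (s < h) ∧ (s + δ) % (2 * h) < h))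
        = Finset.Ico 0 (2 * h - δ) ∪ Finset.Ico h (h + (2 * h - δ)) := by
      ext s
      by_cases hs : s < 2 * h
      · simp only [Finset.mem_filter, Finset.mem_range, Finset.mem_union, Finset.mem_Ico]
        rcases Nat.lt_or_ge (s + δ) (2 * h) with H | H
        · rw [Nat.mod_eq_of_lt H]; omega
        · rw [Nat.mod_eq_sub_mod H, Nat.mod_eq_of_lt (by omega)]; omega
      · simp only [Finset.mem_filter, Finset.mem_range, Finset.mem_union, Finset.mem_Ico]
        omega
    rw [hset, Finset.card_union_of_disjoint, Nat.card_Ico, Nat.card_Ico]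
    · omega
    · rw [Finset.disjoint_left]
      intro s hs1 hs2
      simp only [Finset.mem_Ico] at hs1 hs2
      omega

lemma sep_card (h : ℕ) (hn : n = 2 * h) (hh : 0 < h) (u v : ZMod n) :
    (Finset.univ.filter (fun i : ZMod n => sep h u v i)).card
      = 2 * (cycleGraphZMod n).dist u v := by
  have hn2 : 2 ≤ n := by omega
  have key : (Finset.univ.filter (fun i : ZMod n => sep h u v i)).card
      = ((Finset.range n).filter
          (fun s => (s < h ∧ ¬ ((s + (v - u).val) % n < h)) ∨
            (¬ (s < h) ∧ (s + (v - u).val) % n < h))).card := by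
    apply Finset.card_bij (fun (i : ZMod n) _ => (u + i).val)
    · intro i hi
      simp only [Finset.mem_filter, Finset.mem_univ, true_and] at hi ⊢
      have hv : (v + i).val = ((u + i).val + (v - u).val) % n := by
        have : v + i = (u + i) + (v - u) := by ring
        rw [this, ZMod.val_add]
      constructor
      · exact Finset.mem_range.2 (ZMod.val_lt _)
      · unfold sep at hi
        rw [hv] at hi
        exact hi
    · intro i _ i' _ hval
      have := ZMod.val_injective n hval
      exact add_left_cancel this
    · intro s hs
      simp only [Finset.mem_filter, Finset.mem_range] at hs
      refine ⟨(s : ZMod n) - u, Finset.mem_filter.2 ⟨Finset.mem_univ _, ?_⟩, ?_⟩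
      · have h1 : u + ((s : ZMod n) - u) = (s : ZMod n) := by ring
        have h2 : (u + ((s : ZMod n) - u)).val = s := by
          rw [h1, ZMod.val_cast_of_lt hs.1]
        have hv : (v + ((s : ZMod n) - u)).val = (s + (v - u).val) % n := by
          have he : v + ((s : ZMod n) - u) = (u + ((s : ZMod n) - u)) + (v - u) := by ring
          rw [he, ZMod.val_add, h2]
        unfold sep
        rw [h2, hv]
        exact hs.2
      · have h1 : u + ((s : ZMod n) - u) = (s : ZMod n) := by ring
        rw [h1, ZMod.val_cast_of_lt hs.1]
  rw [key]
  have hδ : (v - u).val < n := ZMod.val_lt _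
  rw [dist_eq_psi hn2 u v]
  unfold psi
  subst hn
  exact count_xor h (v - u).val hh hδ


/-- number of elements of `A` in the arc indexed by `i` -/
def bcnt (h : ℕ) (A : Finset (ZMod n)) (i : ZMod n) : ℕ :=
  (A.filter (fun x => (x + i).val < h)).card

lemma offDiag_dist_sum (h : ℕ) (hn : n = 2 * h) (hh : 0 < h) (A : Finset (ZMod n)) :
    (∑ p ∈ A.offDiag, (cycleGraphZMod n).dist p.1 p.2)
      = ∑ i : ZMod n, bcnt h A i * (A.card - bcnt h A i) := by
  have key : ∀ u v : ZMod n, 2 * (cycleGraphZMod n).dist u v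
      = ∑ i : ZMod n, (if sep h u v i then 1 else 0) := by
    intro u v
    rw [← sep_card h hn hh u v, Finset.card_filter]
  have h2 : 2 * (∑ p ∈ A.offDiag, (cycleGraphZMod n).dist p.1 p.2)
      = 2 * (∑ i : ZMod n, bcnt h A i * (A.card - bcnt h A i)) := by
    rw [Finset.mul_sum]
    calc ∑ p ∈ A.offDiag, 2 * (cycleGraphZMod n).dist p.1 p.2
        = ∑ p ∈ A.offDiag, ∑ i : ZMod n, (if sep h p.1 p.2 i then 1 else 0) := by
          exact Finset.sum_congr rfl (fun p _ => key p.1 p.2)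
      _ = ∑ i : ZMod n, ∑ p ∈ A.offDiag, (if sep h p.1 p.2 i then 1 else 0) :=
          Finset.sum_comm
      _ = ∑ i : ZMod n, ∑ p ∈ A ×ˢ A, (if sep h p.1 p.2 i then 1 else 0) := by
          refine Finset.sum_congr rfl (fun i _ => ?_)
          refine Finset.sum_subset (fun p hp => ?_) (fun p hp hnp => ?_)
          · rw [Finset.mem_offDiag] at hp
            exact Finset.mem_product.2 ⟨hp.1, hp.2.1⟩
          · rw [Finset.mem_product] at hp
            have hpe : p.1 = p.2 := by
              by_contra hne
              exact hnp (Finset.mem_offDiag.2 ⟨hp.1, hp.2, hne⟩)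
            rw [if_neg]
            rw [hpe]
            unfold sep
            tauto
      _ = ∑ i : ZMod n, 2 * (bcnt h A i * (A.card - bcnt h A i)) := by
          refine Finset.sum_congr rfl (fun i _ => ?_)
          rw [Finset.sum_product]
          have hrow : ∀ u ∈ A, (∑ v ∈ A, (if sep h u v i then 1 else 0))
              = (if (u + i).val < h then A.card - bcnt h A i else bcnt h A i) := by
            intro u _
            by_cases hu : (u + i).val < h
            · rw [if_pos hu]
              have : (∑ v ∈ A, (if sep h u v i then 1 else 0))
                  = (A.filter (fun v => ¬ ((v + i).val < h))).card := by
                rw [Finset.card_filter]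
                refine Finset.sum_congr rfl (fun v _ => ?_)
                congr 1
                unfold sep
                simp [hu]
              rw [this]
              have hsplit := Finset.card_filter_add_card_filter_not
                (s := A) (p := fun v => (v + i).val < h)
              unfold bcnt
              omega
            · rw [if_neg hu]
              have : (∑ v ∈ A, (if sep h u v i then 1 else 0))
                  = (A.filter (fun v => (v + i).val < h)).card := by
                rw [Finset.card_filter]
                refine Finset.sum_congr rfl (fun v _ => ?_)
                congr 1
                unfold sep
                simp [hu]
              rw [this]
              rfl
          rw [Finset.sum_congr rfl hrow, Finset.sum_ite, Finset.sum_const, Finset.sum_const,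
            smul_eq_mul, smul_eq_mul]
          have hb : bcnt h A i ≤ A.card := Finset.card_filter_le _ _
          have hnegcard : (A.filter (fun u => ¬ ((u + i).val < h))).card
              = A.card - bcnt h A i := by
            have hsplit := Finset.card_filter_add_card_filter_not
              (s := A) (p := fun u => (u + i).val < h)
            unfold bcnt
            omega
          rw [hnegcard]
          have hbb : (A.filter (fun u => (u + i).val < h)).card = bcnt h A i := rfl
          rw [hbb]
          ring
      _ = 2 * ∑ i : ZMod n, bcnt h A i * (A.card - bcnt h A i) := (Finset.mul_sum _ _ _).symm
  omega


def phi (m : ℕ) : ℕ := m * m / 4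

lemma bcontrib_le (b m : ℕ) (hb : b ≤ m) : b * (m - b) ≤ phi m := by
  obtain ⟨c, rfl⟩ := Nat.le.dest hb
  have hmc : b + c - b = c := by omega
  rw [hmc]
  unfold phi
  rw [Nat.le_div_iff_mul_le (by norm_num)]
  zify
  nlinarith [sq_nonneg ((b : ℤ) - c)]


lemma wienerSet_eq (h : ℕ) (hn : n = 2 * h) (hh : 0 < h) (A : Finset (ZMod n)) :
    wienerSet (cycleGraphZMod n) A
      = (∑ i : ZMod n, bcnt h A i * (A.card - bcnt h A i)) / 2 := by
  unfold wienerSet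
  rw [offDiag_dist_sum h hn hh]

lemma wienerSet_le (h : ℕ) (hn : n = 2 * h) (hh : 0 < h) (A : Finset (ZMod n)) :
    wienerSet (cycleGraphZMod n) A ≤ h * phi A.card := by
  rw [wienerSet_eq h hn hh]
  have hle : (∑ i : ZMod n, bcnt h A i * (A.card - bcnt h A i))
      ≤ ∑ _i : ZMod n, phi A.card :=
    Finset.sum_le_sum (fun i _ => bcontrib_le _ _ (Finset.card_filter_le _ _))
  have hconst : (∑ _i : ZMod n, phi A.card) = n * phi A.card := by
    rw [Finset.sum_const, Finset.card_univ, ZMod.card, smul_eq_mul]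
  calc (∑ i : ZMod n, bcnt h A i * (A.card - bcnt h A i)) / 2
      ≤ (n * phi A.card) / 2 := by
        apply Nat.div_le_div_right
        omega
    _ = h * phi A.card := by
        generalize phi A.card = x
        rw [hn, mul_assoc, Nat.mul_div_cancel_left _ (by norm_num : 0 < 2)]

lemma wienerColoring_le (h : ℕ) (hn : n = 2 * h) (hh : 0 < h) {k : ℕ}
    (g : ZMod n → Fin k) :
    wienerColoring (cycleGraphZMod n) g ≤ h * ((colorType g).map phi).sum := by
  have hrhs : ((colorType g).map phi).sum = ∑ c : Fin k, phi (colorClass g c).card := by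
    unfold colorType
    rw [Multiset.map_map]
    rfl
  rw [hrhs, Finset.mul_sum]
  exact Finset.sum_le_sum (fun c _ => wienerSet_le h hn hh _)


/-! ### list block machinery -/

def rnk (h v : ℕ) : ℕ := if v < h then 2 * v else 2 * (v - h) + 1

def blockIdx : List ℕ → ℕ → ℕ
  | [], _ => 0
  | (m :: L), v => if v < m then 0 else blockIdx L (v - m) + 1

def pre (L : List ℕ) (c : ℕ) : ℕ := (L.take c).sum

@[simp] lemma pre_zero (L : List ℕ) : pre L 0 = 0 := rfl

lemma pre_succ (L : List ℕ) (c : ℕ) : pre L (c + 1) = pre L c + L.getD c 0 := by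
  induction L generalizing c with
  | nil => simp [pre]
  | cons a L ih =>
      cases c with
      | zero => simp [pre]
      | succ c =>
          simp only [pre, List.take_succ_cons, List.sum_cons, List.getD_cons_succ]
          rw [show (L.take (c+1)).sum = pre L (c+1) from rfl, ih c]
          unfold pre
          omega

lemma pre_mono (L : List ℕ) {c d : ℕ} (hcd : c ≤ d) : pre L c ≤ pre L d := by
  induction d with
  | zero =>
      have : c = 0 := by omega
      rw [this]
  | succ d ih =>
      rcases Nat.eq_or_lt_of_le hcd with rfl | hlt
      · exact le_refl _
      · calc pre L c ≤ pre L d := ih (by omega)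
          _ ≤ pre L (d + 1) := by rw [pre_succ]; omega

lemma pre_le_sum (L : List ℕ) (c : ℕ) : pre L c ≤ L.sum := by
  induction L generalizing c with
  | nil => simp [pre]
  | cons a L ih =>
      cases c with
      | zero => simp [pre]
      | succ c =>
          simp only [pre, List.take_succ_cons, List.sum_cons]
          have := ih c
          unfold pre at this
          omega

lemma pre_length (L : List ℕ) : pre L L.length = L.sum := by
  unfold pre
  rw [List.take_length]

lemma blockIdx_lt (L : List ℕ) (v : ℕ) (hv : v < L.sum) : blockIdx L v < L.length := by
  induction L generalizing v with
  | nil => simp at hv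
  | cons a L ih =>
      unfold blockIdx
      split
      · simp
      · simp only [List.length_cons]
        have : v - a < L.sum := by
          simp only [List.sum_cons] at hv
          omega
        have := ih _ this
        omega

lemma blockIdx_mem (L : List ℕ) (v : ℕ) (hv : v < L.sum) :
    pre L (blockIdx L v) ≤ v ∧ v < pre L (blockIdx L v + 1) := by
  induction L generalizing v with
  | nil => simp at hv
  | cons a L ih =>
      unfold blockIdx
      split
      · constructor
        · simp [pre]
        · simpa [pre] using ‹v < a›
      · rename_i hva
        have hv' : v - a < L.sum := by
          simp only [List.sum_cons] at hv
          omega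
        obtain ⟨h1, h2⟩ := ih _ hv'
        constructor
        · have : pre (a :: L) (blockIdx L (v - a) + 1) = a + pre L (blockIdx L (v - a)) := by
            simp [pre, List.take_succ_cons]
          rw [this]
          omega
        · have : pre (a :: L) (blockIdx L (v - a) + 1 + 1)
              = a + pre L (blockIdx L (v - a) + 1) := by
            simp [pre, List.take_succ_cons]
          rw [this]
          omega

lemma blockIdx_eq_iff (L : List ℕ) (v c : ℕ) (hv : v < L.sum) :
    blockIdx L v = c ↔ (pre L c ≤ v ∧ v < pre L (c + 1)) := by
  obtain ⟨h1, h2⟩ := blockIdx_mem L v hv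
  constructor
  · rintro rfl
    exact ⟨h1, h2⟩
  · rintro ⟨h3, h4⟩
    by_contra hne
    rcases Nat.lt_or_ge (blockIdx L v) c with H | H
    · have := pre_mono L (show blockIdx L v + 1 ≤ c by omega)
      omega
    · have := pre_mono L (show c + 1 ≤ blockIdx L v by omega)
      omega

lemma even_list_sum {l : List ℕ} (hl : ∀ x ∈ l, Even x) : Even l.sum := by
  induction l with
  | nil => simp
  | cons a l ih =>
      simp only [List.sum_cons]
      exact Even.add (hl a (by simp)) (ih (fun x hx => hl x (by simp [hx])))

lemma parity_pre {E O : List ℕ} (hE : ∀ x ∈ E, Even x) (hO : ∀ x ∈ O, ¬ Even x)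
    (c : ℕ) (hc : c < (E ++ O).length) (heven : Even ((E ++ O).getD c 0)) :
    Even (pre (E ++ O) c) := by
  rcases Nat.lt_or_ge c E.length with H | H
  · have : pre (E ++ O) c = pre E c := by
      unfold pre
      rw [List.take_append_of_le_length (by omega)]
    rw [this]
    exact even_list_sum (fun x hx => hE x (List.mem_of_mem_take hx))
  · exfalso
    rw [List.getD_append_right _ _ _ _ H] at heven
    have hlen : c - E.length < O.length := by
      rw [List.length_append] at hc
      omega
    rw [List.getD_eq_getElem _ _ hlen] at heven
    exact hO _ (List.getElem_mem hlen) heven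


lemma phi_two_mul (e : ℕ) : phi (2 * e) = e * e := by
  unfold phi
  rw [show 2 * e * (2 * e) = e * e * 4 by ring]
  rw [Nat.mul_div_cancel _ (by norm_num)]

lemma phi_odd (e : ℕ) : phi (2 * e + 1) = e * (e + 1) := by
  unfold phi
  rw [show (2 * e + 1) * (2 * e + 1) = e * (e + 1) * 4 + 1 by ring]
  omega

lemma card_filter_val (P : ℕ → Prop) [DecidablePred P] :
    ((Finset.univ : Finset (ZMod n)).filter (fun x => P x.val)).card
      = ((Finset.range n).filter P).card := by
  apply Finset.card_bij (fun x _ => x.val)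
  · intro x hx
    simp only [Finset.mem_filter, Finset.mem_univ, true_and] at hx ⊢
    exact ⟨Finset.mem_range.2 (ZMod.val_lt x), hx⟩
  · intro a _ b _ hab
    exact ZMod.val_injective n hab
  · intro s hs
    simp only [Finset.mem_filter, Finset.mem_range] at hs
    refine ⟨(s : ZMod n), Finset.mem_filter.2 ⟨Finset.mem_univ _, ?_⟩, ?_⟩
    · rw [ZMod.val_cast_of_lt hs.1]; exact hs.2
    · rw [ZMod.val_cast_of_lt hs.1]

lemma rnk_lt (h : ℕ) {v : ℕ} (hv : v < 2 * h) : rnk h v < 2 * h := by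
  unfold rnk
  split <;> omega

lemma card_filter_rnk (h : ℕ) (hh : 0 < h) (P : ℕ → Prop) [DecidablePred P] :
    ((Finset.range (2 * h)).filter (fun v => P (rnk h v))).card
      = ((Finset.range (2 * h)).filter P).card := by
  apply Finset.card_bij (fun v _ => rnk h v)
  · intro v hv
    simp only [Finset.mem_filter, Finset.mem_range] at hv ⊢
    exact ⟨rnk_lt h hv.1, hv.2⟩
  · intro a ha b hb hab
    simp only [Finset.mem_filter, Finset.mem_range] at ha hb
    unfold rnk at hab
    split at hab <;> split at hab <;> omega
  · intro w hw
    simp only [Finset.mem_filter, Finset.mem_range] at hw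
    rcases Nat.even_or_odd w with ⟨c, hc⟩ | ⟨c, hc⟩
    · refine ⟨c, Finset.mem_filter.2 ⟨Finset.mem_range.2 (by omega), ?_⟩, ?_⟩ <;>
        · have hr : rnk h c = w := by unfold rnk; rw [if_pos (by omega)]; omega
          rw [hr]
          all_goals exact hw.2
    · refine ⟨h + c, Finset.mem_filter.2 ⟨Finset.mem_range.2 (by omega), ?_⟩, ?_⟩ <;>
        · have hr : rnk h (h + c) = w := by unfold rnk; rw [if_neg (by omega)]; omega
          rw [hr]
          all_goals exact hw.2

lemma arc_flip (h : ℕ) (hh : 0 < h) (x : ℕ) :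
    (x % (2 * h) < h) ↔ ¬ ((x + h) % (2 * h) < h) := by
  have e1 : x % (2 * h) < 2 * h := Nat.mod_lt _ (by omega)
  have hx : 2 * h * (x / (2 * h)) + x % (2 * h) = x := Nat.div_add_mod x (2 * h)
  have e2 : (x + h) % (2 * h) = (x % (2 * h) + h) % (2 * h) := by
    conv_lhs => rw [show x + h = x % (2 * h) + h + 2 * h * (x / (2 * h)) from by omega]
    exact Nat.add_mul_mod_self_left _ _ _
  rcases Nat.lt_or_ge (x % (2 * h)) h with H | H
  · have e3 : (x % (2 * h) + h) % (2 * h) = x % (2 * h) + h :=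
      Nat.mod_eq_of_lt (by omega)
    omega
  · have e3 : (x % (2 * h) + h) % (2 * h) = x % (2 * h) - h := by
      rw [Nat.mod_eq_sub_mod (by omega)]
      rw [Nat.mod_eq_of_lt (by omega)]
      omega
    omega

lemma balanced_count (h : ℕ) (hn : n = 2 * h) (hh : 0 < h) (p q : ℕ)
    (hpq : p ≤ q) (hq : q ≤ n) (hpar : Even p ∨ Even q) (i : ZMod n) :
    bcnt h (Finset.univ.filter (fun x : ZMod n => p ≤ rnk h x.val ∧ rnk h x.val < q)) i
      * ((q - p) - bcnt h (Finset.univ.filter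
          (fun x : ZMod n => p ≤ rnk h x.val ∧ rnk h x.val < q)) i)
      = phi (q - p) := by
  set ι := i.val with hι
  have hιlt : ι < n := ZMod.val_lt i
  have hval : ∀ x : ZMod n, (x + i).val = (x.val + ι) % n := by
    intro x
    rw [ZMod.val_add]
  have hb : bcnt h (Finset.univ.filter
      (fun x : ZMod n => p ≤ rnk h x.val ∧ rnk h x.val < q)) i
      = ((Finset.range (2 * h)).filter
          (fun v => (p ≤ rnk h v ∧ rnk h v < q) ∧ (v + ι) % (2 * h) < h)).card := by
    unfold bcnt
    rw [Finset.filter_filter]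
    have hcong : (Finset.univ.filter
        (fun x : ZMod n => (p ≤ rnk h x.val ∧ rnk h x.val < q) ∧ (x + i).val < h))
        = Finset.univ.filter
          (fun x : ZMod n => (p ≤ rnk h x.val ∧ rnk h x.val < q) ∧ (x.val + ι) % n < h) := by
      apply Finset.filter_congr
      intro x _
      rw [hval x]
    rw [hcong, card_filter_val (fun v => (p ≤ rnk h v ∧ rnk h v < q) ∧ (v + ι) % n < h), hn]
  rw [hb]
  set cnt := ((Finset.range (2 * h)).filter
      (fun v => (p ≤ rnk h v ∧ rnk h v < q) ∧ (v + ι) % (2 * h) < h)).card with hcnt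
  -- split the count over antipodal pairs
  have hsplit : cnt = ∑ s ∈ Finset.range h,
      ((if (p ≤ rnk h s ∧ rnk h s < q) ∧ (s + ι) % (2 * h) < h then 1 else 0)
        + (if (p ≤ rnk h (h + s) ∧ rnk h (h + s) < q) ∧ (h + s + ι) % (2 * h) < h
            then 1 else 0)) := by
    rw [hcnt, Finset.card_filter]
    have hrange : Finset.range (2 * h) = Finset.Ico 0 h ∪ Finset.Ico h (2 * h) := by
      rw [Finset.range_eq_Ico, Finset.Ico_union_Ico_eq_Ico (by omega) (by omega)]
    rw [hrange, Finset.sum_union (by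
      rw [Finset.disjoint_left]
      intro a ha hb
      rw [Finset.mem_Ico] at ha hb
      omega)]
    rw [← Finset.range_eq_Ico, Finset.sum_Ico_eq_sum_range]
    rw [show 2 * h - h = h from by omega, ← Finset.sum_add_distrib]
  have key : ∀ s ∈ Finset.range h,
      ((if p ≤ 2 * s ∧ 2 * s + 1 < q then 1 else 0) ≤
        ((if (p ≤ rnk h s ∧ rnk h s < q) ∧ (s + ι) % (2 * h) < h then 1 else 0)
          + (if (p ≤ rnk h (h + s) ∧ rnk h (h + s) < q) ∧ (h + s + ι) % (2 * h) < h
              then 1 else 0)))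
      ∧ (((if (p ≤ rnk h s ∧ rnk h s < q) ∧ (s + ι) % (2 * h) < h then 1 else 0)
          + (if (p ≤ rnk h (h + s) ∧ rnk h (h + s) < q) ∧ (h + s + ι) % (2 * h) < h
              then 1 else 0))
          ≤ (if p ≤ 2 * s + 1 ∧ 2 * s < q then 1 else 0)) := by
    intro s hs
    rw [Finset.mem_range] at hs
    have h1 : rnk h s = 2 * s := by unfold rnk; rw [if_pos hs]
    have h2 : rnk h (h + s) = 2 * s + 1 := by
      unfold rnk
      rw [if_neg (by omega)]
      omega
    rw [h1, h2, show h + s + ι = s + ι + h from by ring]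
    rcases Nat.lt_or_ge ((s + ι) % (2 * h)) h with H | H
    · have H' : ¬ ((s + ι + h) % (2 * h) < h) := (arc_flip h hh (s + ι)).mp H
      constructor <;> split_ifs <;> omega
    · have H' : ((s + ι + h) % (2 * h) < h) := by
        by_contra hcon
        have := (arc_flip h hh (s + ι)).mpr hcon
        omega
      constructor <;> split_ifs <;> omega
  have hFle : ((Finset.range h).filter (fun s => p ≤ 2 * s ∧ 2 * s + 1 < q)).card ≤ cnt := by
    rw [hsplit, Finset.card_filter]
    exact Finset.sum_le_sum (fun s hs => (key s hs).1)
  have hGle : cnt ≤ ((Finset.range h).filter (fun s => p ≤ 2 * s + 1 ∧ 2 * s < q)).card := by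
    rw [hsplit, Finset.card_filter]
    exact Finset.sum_le_sum (fun s hs => (key s hs).2)
  have hFval : ((Finset.range h).filter (fun s => p ≤ 2 * s ∧ 2 * s + 1 < q)).card
      = q / 2 - (p + 1) / 2 := by
    have : ((Finset.range h).filter (fun s => p ≤ 2 * s ∧ 2 * s + 1 < q))
        = Finset.Ico ((p + 1) / 2) (q / 2) := by
      ext s
      simp only [Finset.mem_filter, Finset.mem_range, Finset.mem_Ico]
      omega
    rw [this, Nat.card_Ico]
  have hGval : ((Finset.range h).filter (fun s => p ≤ 2 * s + 1 ∧ 2 * s < q)).card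
      = (q + 1) / 2 - p / 2 := by
    have : ((Finset.range h).filter (fun s => p ≤ 2 * s + 1 ∧ 2 * s < q))
        = Finset.Ico (p / 2) ((q + 1) / 2) := by
      ext s
      simp only [Finset.mem_filter, Finset.mem_range, Finset.mem_Ico]
      omega
    rw [this, Nat.card_Ico]
  rw [hFval] at hFle
  rw [hGval] at hGle
  have hpar' : p % 2 = 0 ∨ q % 2 = 0 := by
    rcases hpar with ⟨r, hr⟩ | ⟨r, hr⟩
    · left; omega
    · right; omega
  rcases Nat.even_or_odd (q - p) with ⟨r, hr⟩ | ⟨r, hr⟩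
  · have hc : cnt = r := by omega
    rw [hr, hc, show r + r - r = r from by omega, show r + r = 2 * r from by omega, phi_two_mul]
  · have hc : cnt = r ∨ cnt = r + 1 := by omega
    rw [hr, phi_odd]
    rcases hc with hc | hc <;> rw [hc]
    · rw [show 2 * r + 1 - r = r + 1 from by omega]
    · rw [show 2 * r + 1 - (r + 1) = r from by omega]
      ring


lemma exists_max_coloring (h : ℕ) (hn : n = 2 * h) (hh : 0 < h) (k : ℕ) (t : Multiset ℕ)
    (hcard : t.card = k) (hsum : t.sum = n) (hpos : ∀ m ∈ t, m ≠ 0) :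
    ∃ g : ZMod n → Fin k, Function.Surjective g ∧ colorType g = t ∧
      wienerColoring (cycleGraphZMod n) g = h * (t.map phi).sum := by
  classical
  set E := t.toList.filter (fun m => decide (Even m)) with hE
  set O := t.toList.filter (fun m => ! decide (Even m)) with hO
  set L := E ++ O with hL
  have hperm : L.Perm t.toList := List.filter_append_perm _ _
  have hLt : (↑L : Multiset ℕ) = t := by
    have h1 : (↑L : Multiset ℕ) = ↑t.toList := Multiset.coe_eq_coe.mpr hperm
    rw [h1, Multiset.coe_toList]
  have hlen : L.length = k := by
    have := congrArg Multiset.card hLt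
    rw [Multiset.coe_card] at this
    exact this.trans hcard
  have hsumL : L.sum = n := by
    have := congrArg Multiset.sum hLt
    rw [Multiset.sum_coe] at this
    exact this.trans hsum
  have hposL : ∀ m ∈ L, m ≠ 0 := by
    intro m hm
    exact hpos m (by rw [← hLt]; exact Multiset.mem_coe.mpr hm)
  have hparity : ∀ c, c < L.length → Even (L.getD c 0) → Even (pre L c) := by
    intro c hc he
    refine parity_pre ?_ ?_ c hc he
    · intro x hx
      have := List.mem_filter.1 hx
      exact of_decide_eq_true this.2
    · intro x hx
      have h2 := (List.mem_filter.1 hx).2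
      simpa using h2
  subst hlen
  have hvlt : ∀ x : ZMod n, rnk h x.val < L.sum := by
    intro x
    have hx := ZMod.val_lt x
    have h2 := rnk_lt h (v := x.val) (by omega)
    omega
  set g : ZMod n → Fin L.length :=
    (fun x => ⟨blockIdx L (rnk h x.val), blockIdx_lt _ _ (hvlt x)⟩) with hg
  have hclassEq : ∀ c : Fin L.length, colorClass g c
      = Finset.univ.filter (fun x : ZMod n =>
          pre L c.val ≤ rnk h x.val ∧ rnk h x.val < pre L (c.val + 1)) := by
    intro c
    unfold colorClass
    apply Finset.filter_congr
    intro x _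
    rw [hg]
    rw [Fin.ext_iff]
    exact blockIdx_eq_iff L _ _ (hvlt x)
  have hclassCard : ∀ c : Fin L.length, (colorClass g c).card = L.getD c.val 0 := by
    intro c
    rw [hclassEq c]
    rw [card_filter_val (fun v => pre L c.val ≤ rnk h v ∧ rnk h v < pre L (c.val + 1))]
    rw [hn, card_filter_rnk h hh (fun w => pre L c.val ≤ w ∧ w < pre L (c.val + 1))]
    have hIco : (Finset.range (2 * h)).filter
        (fun w => pre L c.val ≤ w ∧ w < pre L (c.val + 1))
        = Finset.Ico (pre L c.val) (pre L (c.val + 1)) := by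
      ext w
      simp only [Finset.mem_filter, Finset.mem_range, Finset.mem_Ico]
      have h1 : pre L (c.val + 1) ≤ 2 * h := by
        rw [← hn, ← hsumL]
        exact pre_le_sum L _
      omega
    rw [hIco, Nat.card_Ico]
    have := pre_succ L c.val
    omega
  refine ⟨g, ?_, ?_, ?_⟩
  · intro c
    have hpc : 0 < (colorClass g c).card := by
      rw [hclassCard c, List.getD_eq_getElem L 0 c.isLt]
      exact Nat.pos_of_ne_zero (hposL _ (List.getElem_mem _))
    obtain ⟨x, hx⟩ := Finset.card_pos.1 hpc
    exact ⟨x, (Finset.mem_filter.1 hx).2⟩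
  · unfold colorType
    rw [Fin.univ_val_map]
    have hofn : (List.ofFn (fun i : Fin L.length => (colorClass g i).card)) = L := by
      have hfn : (fun i : Fin L.length => (colorClass g i).card)
          = (fun i : Fin L.length => L[(i : ℕ)]) := by
        funext i
        rw [hclassCard i, List.getD_eq_getElem L 0 i.isLt]
      rw [hfn, List.ofFn_getElem]
    rw [hofn, hLt]
  · unfold wienerColoring
    have hper : ∀ c : Fin L.length,
        wienerSet (cycleGraphZMod n) (colorClass g c) = h * phi (L.getD c.val 0) := by
      intro c
      rw [wienerSet_eq h hn hh]
      have hm : L.getD c.val 0 = pre L (c.val + 1) - pre L c.val := by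
        have := pre_succ L c.val
        omega
      have hcardA : (colorClass g c).card = pre L (c.val + 1) - pre L c.val := by
        rw [hclassCard c, hm]
      have hparOK : Even (pre L c.val) ∨ Even (pre L (c.val + 1)) := by
        rcases Nat.even_or_odd (L.getD c.val 0) with hEm | hOm
        · left
          exact hparity c.val c.isLt hEm
        · rcases Nat.even_or_odd (pre L c.val) with hp | hp
          · left; exact hp
          · right
            rw [pre_succ L c.val]
            exact hp.add_odd hOm
      have hball : ∀ i : ZMod n,
          bcnt h (colorClass g c) i * ((colorClass g c).card - bcnt h (colorClass g c) i)
            = phi (pre L (c.val + 1) - pre L c.val) := by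
        intro i
        rw [hcardA, hclassEq c]
        exact balanced_count h hn hh _ _ (pre_mono L (by omega))
          (by rw [← hsumL]; exact pre_le_sum L _) hparOK i
      rw [Finset.sum_congr rfl (fun i _ => hball i)]
      rw [Finset.sum_const, Finset.card_univ, ZMod.card, smul_eq_mul, ← hm]
      generalize phi (L.getD c.val 0) = x
      rw [hn, mul_assoc, Nat.mul_div_cancel_left _ (by norm_num : 0 < 2)]
    rw [Finset.sum_congr rfl (fun c _ => hper c)]
    rw [← Finset.mul_sum]
    congr 1
    rw [← hLt, Multiset.map_coe, Multiset.sum_coe]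
    have hmap : L.map phi = List.ofFn (fun i : Fin L.length => phi (L.getD i.val 0)) := by
      conv_lhs => rw [← List.ofFn_getElem (xs := L)]
      rw [List.map_ofFn]
      congr 1
      funext i
      simp only [Function.comp]
      rw [List.getD_eq_getElem L 0 i.isLt]
    rw [hmap, List.sum_ofFn]


lemma sum_map_set (L : List ℕ) (i v : ℕ) (hi : i < L.length) :
    ((L.set i v).map phi).sum + phi (L.getD i 0) = (L.map phi).sum + phi v := by
  induction L generalizing i with
  | nil => simp at hi
  | cons a L ih =>
      cases i with
      | zero =>
          simp only [List.set_cons_zero, List.map_cons, List.sum_cons, List.getD_cons_zero]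
          omega
      | succ i =>
          simp only [List.set_cons_succ, List.map_cons, List.sum_cons, List.getD_cons_succ]
          have := ih i (by simpa using hi)
          omega

lemma phi_balance (a : ℕ) (ha : 0 < a) :
    phi (2 * a - 1) + phi (2 * a + 1) = 2 * phi (2 * a) := by
  obtain ⟨b, rfl⟩ : ∃ b, a = b + 1 := ⟨a - 1, by omega⟩
  rw [show 2 * (b + 1) - 1 = 2 * b + 1 from by omega, phi_odd,
    show 2 * (b + 1) + 1 = 2 * (b + 1) + 1 from rfl, phi_odd, phi_two_mul]
  ring

lemma colorType_card {k : ℕ} (u : ZMod n → Fin k) : (colorType u).card = k := by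
  unfold colorType
  rw [Multiset.card_map]
  exact Finset.card_univ.trans (Fintype.card_fin k)

lemma colorType_sum {k : ℕ} (u : ZMod n → Fin k) : (colorType u).sum = n := by
  unfold colorType
  have h1 : (Multiset.map (fun i => (colorClass u i).card) Finset.univ.val).sum
      = ∑ i : Fin k, (colorClass u i).card := rfl
  rw [h1]
  unfold colorClass
  rw [← Finset.card_eq_sum_card_fiberwise (f := u) (t := Finset.univ)
    (fun x _ => Finset.mem_univ _)]
  rw [Finset.card_univ, ZMod.card]

lemma colorType_pos {k : ℕ} (u : ZMod n → Fin k) (hu : Function.Surjective u) :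
    ∀ m ∈ colorType u, m ≠ 0 := by
  intro m hm
  unfold colorType at hm
  rw [Multiset.mem_map] at hm
  obtain ⟨i, _, rfl⟩ := hm
  obtain ⟨x, hx⟩ := hu i
  have hmem : x ∈ colorClass u i := by
    unfold colorClass
    simp [hx]
  exact Finset.card_ne_zero_of_mem hmem

end CycAux

/-- If `f, f'` are `k`-color weak maximizers of `W` on `C_n` with
`type(f') = R_{j,j'}(type(f))` (indices zero-based, `j ≤ j' < k`), `n` even and
`n_j = n_{j'} = 2a` for a positive integer `a`, then `W(f) = W(f')`. -/
theorem cycle_transfer_eq (n k : ℕ) [NeZero n] (f f' : ZMod n → Fin k)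
    (hf : IsWeakMaximizer (cycleGraphZMod n) f)
    (hf' : IsWeakMaximizer (cycleGraphZMod n) f')
    (j j' : ℕ) (hjj' : j ≤ j') (hj'k : j' < k)
    (htype : colorType f' = rhTransfer ((colorType f).sort (· ≤ ·)) j j')
    (hn : Even n) (a : ℕ) (ha : 0 < a)
    (hnj : ((colorType f).sort (· ≤ ·)).getD j 0 = 2 * a)
    (hnj' : ((colorType f).sort (· ≤ ·)).getD j' 0 = 2 * a) :
    wienerColoring (cycleGraphZMod n) f = wienerColoring (cycleGraphZMod n) f' := by
  classical
  obtain ⟨h, hhn⟩ := hn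
  have hn2 : n = 2 * h := by omega
  have hh : 0 < h := by
    have := NeZero.pos n
    omega
  have main : ∀ u : ZMod n → Fin k, IsWeakMaximizer (cycleGraphZMod n) u →
      wienerColoring (cycleGraphZMod n) u = h * ((colorType u).map CycAux.phi).sum := by
    intro u hu
    obtain ⟨g, hgs, hgt, hgw⟩ := CycAux.exists_max_coloring h hn2 hh k (colorType u)
      (CycAux.colorType_card u) (CycAux.colorType_sum u) (CycAux.colorType_pos u hu.1)
    have h1 := hu.2 g hgs hgt
    have h2 := CycAux.wienerColoring_le h hn2 hh u
    omega
  rw [main f hf, main f' hf']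
  congr 1
  set S := (colorType f).sort (· ≤ ·) with hS
  have hSlen : S.length = k := by
    rw [hS, Multiset.length_sort, CycAux.colorType_card]
  have hjS : j < S.length := by omega
  have hj'S : j' < S.length := by omega
  set S1 := S.set j (S.getD j 0 - 1) with hS1
  have hS1len : S1.length = S.length := by rw [hS1, List.length_set]
  set X := S1.getD j' 0 with hX
  have htgt : colorType f' = ↑(S1.set j' (X + 1)) := htype
  rw [htgt, Multiset.map_coe, Multiset.sum_coe]
  have hcf : colorType f = ↑S := (Multiset.sort_eq _ _).symm
  rw [hcf, Multiset.map_coe, Multiset.sum_coe]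
  have eq1 := CycAux.sum_map_set S1 j' (X + 1) (by omega)
  rw [← hX] at eq1
  have eq2 := CycAux.sum_map_set S j (S.getD j 0 - 1) hjS
  rw [← hS1] at eq2
  rw [hnj] at eq2
  by_cases hjj : j = j'
  · have hXval : X = 2 * a - 1 := by
      rw [hX, hS1, ← hjj, List.getD_eq_getElem _ _ (by rw [List.length_set]; omega),
        List.getElem_set_self, hnj]
    rw [hXval, show 2 * a - 1 + 1 = 2 * a from by omega] at eq1 ⊢
    omega
  · have hXval : X = 2 * a := by
      rw [hX, hS1, List.getD_eq_getElem _ _ (by rw [List.length_set]; omega),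
        List.getElem_set_ne hjj, ← List.getD_eq_getElem S 0 hj'S, hnj']
    rw [hXval] at eq1 ⊢
    have hbal := CycAux.phi_balance a ha
    omega
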